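/- arXiv:2105.08114 — 5 statements merged into one kernel-verified Lean document; each statement's English description precedes it below -/
import Mathlib

section
/- For every real α ∈ (0,∞) with α ≠ 1, the minimum of the Rényi divergence D_α(p‖U) over all feasible distributions p for the alternative PIR scheme equals (1/(α−1)) · log[ N·((1−L(D−1))/N)^α + (N(L+1)^{K−1}−N)·(L(D−1)/(N(L+1)^{K−1}−N))^α ] + log(N(L+1)^{K−1}), and this minimum is attained by q*. -/
open Finset Real

/-- Download cost of option `m` (0-indexed: options `1,…,N` of the paper are `m < N`)
in the symmetric TSC scheme with `N` databases and `K` messages. -/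
noncomputable def tscCost (N m : ℕ) : ℝ := if m < N then (N : ℝ) - 1 else (N : ℝ)

/-- `p` is a feasible query distribution for the symmetric TSC scheme with expected
normalized download cost `D`. -/
def TSCFeasible (N K : ℕ) (D : ℝ) (p : ℕ → ℝ) : Prop :=
  (∀ m ∈ Finset.range (N ^ K), 0 ≤ p m) ∧
  (∑ m ∈ Finset.range (N ^ K), p m = 1) ∧
  (1 / ((N : ℝ) - 1)) * (∑ m ∈ Finset.range (N ^ K), p m * tscCost N m) = D

/-- The optimal distribution `p*` for the symmetric TSC scheme. -/
noncomputable def tscOpt (N K : ℕ) (D : ℝ) (m : ℕ) : ℝ :=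
  if m < N then (1 - ((N : ℝ) - 1) * (D - 1)) / N
  else ((N : ℝ) - 1) * (D - 1) / ((N : ℝ) ^ K - (N : ℝ))

/-- Download cost of option `m` (0-indexed) in the alternative PIR scheme with
message length `L`. -/
noncomputable def altCost (N L m : ℕ) : ℝ := if m < N then (L : ℝ) else (L : ℝ) + 1

/-- `p` is a feasible query distribution for the alternative PIR scheme
(`M = N (L+1)^(K-1)` options) with expected normalized download cost `D`. -/
def AltFeasible (N K L : ℕ) (D : ℝ) (p : ℕ → ℝ) : Prop :=
  (∀ m ∈ Finset.range (N * (L + 1) ^ (K - 1)), 0 ≤ p m) ∧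
  (∑ m ∈ Finset.range (N * (L + 1) ^ (K - 1)), p m = 1) ∧
  (1 / (L : ℝ)) * (∑ m ∈ Finset.range (N * (L + 1) ^ (K - 1)), p m * altCost N L m) = D

/-- The optimal distribution `q*` for the alternative PIR scheme. -/
noncomputable def altOpt (N K L : ℕ) (D : ℝ) (m : ℕ) : ℝ :=
  if m < N then (1 - (L : ℝ) * (D - 1)) / N
  else (L : ℝ) * (D - 1) / ((N : ℝ) * ((L : ℝ) + 1) ^ (K - 1) - (N : ℝ))

/-- Rényi divergence of order `α` (`0 < α`, `α ≠ 1`) of a distribution `p` on `M`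
options from the uniform distribution on those options (natural logarithm). -/
noncomputable def renyiDiv (M : ℕ) (α : ℝ) (p : ℕ → ℝ) : ℝ :=
  (1 / (α - 1)) * Real.log ((M : ℝ) ^ (α - 1) * ∑ m ∈ Finset.range M, p m ^ α)

/-- Kullback–Leibler divergence of a distribution `p` on `M` options from the uniform
distribution on those options (natural logarithm, with `0 · log 0 = 0`). -/
noncomputable def klDivUnif (M : ℕ) (p : ℕ → ℝ) : ℝ :=
  ∑ m ∈ Finset.range M, p m * Real.log ((M : ℝ) * p m)

/-- The maximum of `p` over the `M` options. -/
noncomputable def maxOver (M : ℕ) (hM : M ≠ 0) (p : ℕ → ℝ) : ℝ :=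
  (Finset.range M).sup' (Finset.nonempty_range_iff.mpr hM) p

lemma jensen_rpow_ge (s : Finset ℕ) (hs : s.Nonempty) (p : ℕ → ℝ)
    (hp : ∀ i ∈ s, 0 ≤ p i) {α : ℝ} (hα : 1 ≤ α) :
    (s.card : ℝ) * ((∑ i ∈ s, p i) / s.card) ^ α ≤ ∑ i ∈ s, p i ^ α := by
  have hc : (0:ℝ) < s.card := by exact_mod_cast hs.card_pos
  have h := (convexOn_rpow hα).map_sum_le
    (t := s) (w := fun _ => (s.card:ℝ)⁻¹) (p := p)
    (fun i _ => by positivity)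
    (by simp [Finset.sum_const, mul_comm]; field_simp)
    (fun i hi => hp i hi)
  simp only [smul_eq_mul, ← Finset.mul_sum] at h
  have h1 : (s.card:ℝ)⁻¹ * ∑ i ∈ s, p i = (∑ i ∈ s, p i) / s.card := by
    rw [div_eq_inv_mul]
  rw [h1] at h
  calc (s.card : ℝ) * ((∑ i ∈ s, p i) / s.card) ^ α
      ≤ (s.card : ℝ) * ((s.card:ℝ)⁻¹ * ∑ i ∈ s, p i ^ α) :=
        mul_le_mul_of_nonneg_left h hc.le
    _ = ∑ i ∈ s, p i ^ α := by field_simp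

lemma jensen_rpow_le (s : Finset ℕ) (hs : s.Nonempty) (p : ℕ → ℝ)
    (hp : ∀ i ∈ s, 0 ≤ p i) {α : ℝ} (hα0 : 0 ≤ α) (hα : α ≤ 1) :
    ∑ i ∈ s, p i ^ α ≤ (s.card : ℝ) * ((∑ i ∈ s, p i) / s.card) ^ α := by
  have hc : (0:ℝ) < s.card := by exact_mod_cast hs.card_pos
  have h := (Real.concaveOn_rpow hα0 hα).le_map_sum
    (t := s) (w := fun _ => (s.card:ℝ)⁻¹) (p := p)
    (fun i _ => by positivity)
    (by simp [Finset.sum_const, mul_comm]; field_simp)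
    (fun i hi => hp i hi)
  simp only [smul_eq_mul, ← Finset.mul_sum] at h
  have h1 : (s.card:ℝ)⁻¹ * ∑ i ∈ s, p i = (∑ i ∈ s, p i) / s.card := by
    rw [div_eq_inv_mul]
  rw [h1] at h
  calc ∑ i ∈ s, p i ^ α = (s.card : ℝ) * ((s.card:ℝ)⁻¹ * ∑ i ∈ s, p i ^ α) := by field_simp
    _ ≤ (s.card : ℝ) * ((∑ i ∈ s, p i) / s.card) ^ α := mul_le_mul_of_nonneg_left h hc.le

/-- for every order `α ∈ (0,∞)`, `α ≠ 1`, the minimum of the Rényi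
divergence from uniform over feasible distributions of the alternative PIR scheme equals
`(1/(α-1)) log[N((1-L(D-1))/N)^α + (N(L+1)^(K-1)-N)(L(D-1)/(N(L+1)^(K-1)-N))^α]
 + log(N(L+1)^(K-1))`, attained by `q*`. -/
theorem alt_renyi_tradeoff (N K L : ℕ) (hN : 3 ≤ N) (hK : 2 ≤ K)
    (hL1 : 1 ≤ L) (hL2 : L ≤ N - 2) (D : ℝ)
    (hD1 : 1 ≤ D) (hD2 : D ≤ ∑ k ∈ Finset.range K, ((N : ℝ) ^ k)⁻¹)
    (α : ℝ) (hα0 : 0 < α) (hα1 : α ≠ 1) :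
    AltFeasible N K L D (altOpt N K L D) ∧
    (∀ p : ℕ → ℝ, AltFeasible N K L D p →
      (1 / (α - 1)) * Real.log
          ((N : ℝ) * ((1 - (L : ℝ) * (D - 1)) / N) ^ α +
            ((N : ℝ) * ((L : ℝ) + 1) ^ (K - 1) - N) *
              ((L : ℝ) * (D - 1) / ((N : ℝ) * ((L : ℝ) + 1) ^ (K - 1) - N)) ^ α) +
        Real.log ((N : ℝ) * ((L : ℝ) + 1) ^ (K - 1)) ≤
        renyiDiv (N * (L + 1) ^ (K - 1)) α p) ∧
    renyiDiv (N * (L + 1) ^ (K - 1)) α (altOpt N K L D) =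
      (1 / (α - 1)) * Real.log
          ((N : ℝ) * ((1 - (L : ℝ) * (D - 1)) / N) ^ α +
            ((N : ℝ) * ((L : ℝ) + 1) ^ (K - 1) - N) *
              ((L : ℝ) * (D - 1) / ((N : ℝ) * ((L : ℝ) + 1) ^ (K - 1) - N)) ^ α) +
        Real.log ((N : ℝ) * ((L : ℝ) + 1) ^ (K - 1)) := by
  set Mn := N * (L + 1) ^ (K - 1) with hMn
  have hN0 : (0:ℝ) < N := by positivity
  have hN3 : (3:ℝ) ≤ N := by exact_mod_cast hN
  have hL0 : (1:ℝ) ≤ L := by exact_mod_cast hL1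
  have hLN : (L:ℝ) ≤ (N:ℝ) - 2 := by
    have : (L:ℝ) ≤ ((N - 2 : ℕ) : ℝ) := by exact_mod_cast hL2
    rwa [Nat.cast_sub (by omega)] at this
  have h2pow : 2 ≤ (L + 1) ^ (K - 1) := by
    calc 2 = 2 ^ 1 := rfl
      _ ≤ (L + 1) ^ 1 := Nat.pow_le_pow_left (by omega) 1
      _ ≤ (L + 1) ^ (K - 1) := Nat.pow_le_pow_right (by omega) (by omega)
  have hNMlt : N < Mn := by
    have : N * 2 ≤ Mn := by rw [hMn]; exact Nat.mul_le_mul_left N h2pow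
    omega
  have hNM : N ≤ Mn := hNMlt.le
  have hMR : (Mn:ℝ) = (N:ℝ) * ((L:ℝ) + 1) ^ (K - 1) := by
    rw [hMn]; push_cast; ring
  have hM0 : (0:ℝ) < Mn := by
    have : 0 < Mn := by omega
    exact_mod_cast this
  -- key bound : L * (D - 1) < 1
  have hgeom : ∑ k ∈ Finset.range K, ((N : ℝ) ^ k)⁻¹ ≤ 1 / (1 - (N:ℝ)⁻¹) := by
    have h1 : ∀ k, ((N : ℝ) ^ k)⁻¹ = ((N:ℝ)⁻¹) ^ k := fun k => by rw [inv_pow]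
    simp only [h1]
    rw [Finset.range_eq_Ico]
    have := geom_sum_Ico_le_of_lt_one (x := (N:ℝ)⁻¹) (by positivity)
      (by rw [inv_lt_one_iff₀]; right; linarith) (m := 0) (n := K)
    simpa using this
  have hBlt : (L:ℝ) * (D - 1) < 1 := by
    have hNm1 : (0:ℝ) < (N:ℝ) - 1 := by linarith
    have h2 : 1 / (1 - (N:ℝ)⁻¹) = (N:ℝ) / ((N:ℝ) - 1) := by
      field_simp
    have hD3 : D ≤ (N:ℝ) / ((N:ℝ) - 1) := by rw [← h2]; exact hD2.trans hgeom
    have hD4 : ((N:ℝ) - 1) * D ≤ N := by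
      have := (le_div_iff₀ hNm1).mp hD3
      linarith [this]
    nlinarith [mul_le_mul_of_nonneg_right hLN (sub_nonneg.2 hD1)]
  set B := (L:ℝ) * (D - 1) with hB
  have hB0 : 0 ≤ B := by
    have : 0 ≤ D - 1 := by linarith
    positivity
  have hA0 : 0 < 1 - B := by linarith
  have hden : (0:ℝ) < (Mn:ℝ) - N := by
    have : (N:ℝ) < Mn := by exact_mod_cast hNMlt
    linarith
  have hdenR : (N:ℝ) * ((L:ℝ) + 1) ^ (K - 1) - (N:ℝ) = (Mn:ℝ) - N := by rw [hMR]
  set c1 := (1 - (L:ℝ) * (D - 1)) / N with hc1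
  set c2 := (L:ℝ) * (D - 1) / ((N:ℝ) * ((L:ℝ) + 1) ^ (K - 1) - (N:ℝ)) with hc2
  have hc2' : c2 = B / ((Mn:ℝ) - N) := by rw [hc2, hdenR]
  have hc1pos : 0 < c1 := by rw [hc1]; exact div_pos hA0 hN0
  have hc2nn : 0 ≤ c2 := by rw [hc2']; positivity
  -- splitting sums
  have hsplit : ∀ f : ℕ → ℝ, ∑ m ∈ Finset.range Mn, f m
      = ∑ m ∈ Finset.range N, f m + ∑ m ∈ Finset.Ico N Mn, f m :=
    fun f => (Finset.sum_range_add_sum_Ico f hNM).symm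
  have hcard1 : ((Finset.range N).card : ℝ) = N := by simp
  have hcard2 : ((Finset.Ico N Mn).card : ℝ) = (Mn:ℝ) - N := by
    rw [Nat.card_Ico, Nat.cast_sub hNM]
  have hne1 : (Finset.range N).Nonempty := Finset.nonempty_range_iff.mpr (by omega)
  have hne2 : (Finset.Ico N Mn).Nonempty := by
    rw [Finset.nonempty_Ico]; omega
  -- values of altOpt
  have hval1 : ∀ m ∈ Finset.range N, altOpt N K L D m = c1 := by
    intro m hm
    rw [altOpt, if_pos (Finset.mem_range.mp hm)]
  have hval2 : ∀ m ∈ Finset.Ico N Mn, altOpt N K L D m = c2 := by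
    intro m hm
    rw [altOpt, if_neg (by simpa using (Finset.mem_Ico.mp hm).1)]
  have hcost1 : ∀ m ∈ Finset.range N, altCost N L m = (L:ℝ) := by
    intro m hm; rw [altCost, if_pos (Finset.mem_range.mp hm)]
  have hcost2 : ∀ m ∈ Finset.Ico N Mn, altCost N L m = (L:ℝ) + 1 := by
    intro m hm; rw [altCost, if_neg (by simpa using (Finset.mem_Ico.mp hm).1)]
  have eOpt1 : ∑ m ∈ Finset.range N, altOpt N K L D m = ∑ m ∈ Finset.range N, c1 :=
    Finset.sum_congr rfl hval1
  have eOpt2 : ∑ m ∈ Finset.Ico N Mn, altOpt N K L D m = ∑ m ∈ Finset.Ico N Mn, c2 :=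
    Finset.sum_congr rfl hval2
  have eOptA1 : ∑ m ∈ Finset.range N, (altOpt N K L D m) ^ α
      = ∑ m ∈ Finset.range N, c1 ^ α :=
    Finset.sum_congr rfl (fun m hm => by rw [hval1 m hm])
  have eOptA2 : ∑ m ∈ Finset.Ico N Mn, (altOpt N K L D m) ^ α
      = ∑ m ∈ Finset.Ico N Mn, c2 ^ α :=
    Finset.sum_congr rfl (fun m hm => by rw [hval2 m hm])
  have eOptC1 : ∑ m ∈ Finset.range N, altOpt N K L D m * altCost N L m
      = ∑ m ∈ Finset.range N, c1 * (L:ℝ) :=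
    Finset.sum_congr rfl (fun m hm => by rw [hval1 m hm, hcost1 m hm])
  have eOptC2 : ∑ m ∈ Finset.Ico N Mn, altOpt N K L D m * altCost N L m
      = ∑ m ∈ Finset.Ico N Mn, c2 * ((L:ℝ) + 1) :=
    Finset.sum_congr rfl (fun m hm => by rw [hval2 m hm, hcost2 m hm])
  -- the optimal value S*
  set Sstar := (N : ℝ) * c1 ^ α + ((N : ℝ) * ((L : ℝ) + 1) ^ (K - 1) - N) * c2 ^ α with hSstar
  have hSstar' : Sstar = (N : ℝ) * c1 ^ α + ((Mn:ℝ) - N) * c2 ^ α := by rw [hSstar, hdenR]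
  have hSstarpos : 0 < Sstar := by
    rw [hSstar']
    have h1 : 0 < (N:ℝ) * c1 ^ α := by
      have := Real.rpow_pos_of_pos hc1pos α; positivity
    have h2 : 0 ≤ ((Mn:ℝ) - N) * c2 ^ α := by
      have := Real.rpow_nonneg hc2nn α; positivity
    linarith
  -- feasibility of altOpt
  have hfeas : AltFeasible N K L D (altOpt N K L D) := by
    refine ⟨?_, ?_, ?_⟩
    · intro m _
      rw [altOpt]
      split
      · exact (div_nonneg hA0.le hN0.le)
      · rw [hdenR]; positivity
    · rw [hsplit, eOpt1, eOpt2,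
        Finset.sum_const, Finset.sum_const, nsmul_eq_mul, nsmul_eq_mul, hcard1, hcard2,
        hc1, hc2']
      field_simp
      linarith
    · have : ∑ m ∈ Finset.range Mn, altOpt N K L D m * altCost N L m
          = (N:ℝ) * (c1 * L) + ((Mn:ℝ) - N) * (c2 * ((L:ℝ)+1)) := by
        rw [hsplit, eOptC1, eOptC2,
          Finset.sum_const, Finset.sum_const, nsmul_eq_mul, nsmul_eq_mul, hcard1, hcard2]
      rw [this, hc1, hc2']
      have hLne : (L:ℝ) ≠ 0 := by linarith
      field_simp
      ring
    
  -- sum of altOpt ^ α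
  have hoptsum : ∑ m ∈ Finset.range Mn, (altOpt N K L D m) ^ α = Sstar := by
    rw [hsplit, eOptA1, eOptA2,
      Finset.sum_const, Finset.sum_const, nsmul_eq_mul, nsmul_eq_mul, hcard1, hcard2, hSstar']
  -- renyiDiv decomposition
  have hrenyi : ∀ p : ℕ → ℝ, 0 < ∑ m ∈ Finset.range Mn, p m ^ α →
      renyiDiv Mn α p = Real.log Mn + (1 / (α - 1)) * Real.log (∑ m ∈ Finset.range Mn, p m ^ α) := by
    intro p hS
    rw [renyiDiv, Real.log_mul (by positivity) hS.ne', Real.log_rpow hM0]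
    have hαne : α - 1 ≠ 0 := sub_ne_zero.mpr hα1
    field_simp
  have hlogM : Real.log ((N : ℝ) * ((L : ℝ) + 1) ^ (K - 1)) = Real.log Mn := by rw [hMR]
  refine ⟨hfeas, ?_, ?_⟩
  · -- the inequality
    intro p hp
    obtain ⟨hp0, hp1, hp2⟩ := hp
    rw [← hMn] at hp0 hp1 hp2
    have hp0' : ∀ m ∈ Finset.range N, 0 ≤ p m := fun m hm =>
      hp0 m (Finset.mem_range.mpr (lt_of_lt_of_le (Finset.mem_range.mp hm) hNM))
    have hp0'' : ∀ m ∈ Finset.Ico N Mn, 0 ≤ p m := fun m hm =>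
      hp0 m (Finset.mem_range.mpr (Finset.mem_Ico.mp hm).2)
    set Ap := ∑ m ∈ Finset.range N, p m with hAp
    set Bp := ∑ m ∈ Finset.Ico N Mn, p m with hBp
    have hsum1 : Ap + Bp = 1 := by rw [hAp, hBp, ← hsplit]; exact hp1
    have hcost : (L:ℝ) * Ap + ((L:ℝ) + 1) * Bp = (L:ℝ) * D := by
      have hLne : (L:ℝ) ≠ 0 := by linarith
      have h : ∑ m ∈ Finset.range Mn, p m * altCost N L m = (L:ℝ) * D := by
        field_simp at hp2; linarith [hp2]
      rw [hsplit] at h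
      have eC1 : ∑ m ∈ Finset.range N, p m * altCost N L m
          = ∑ m ∈ Finset.range N, p m * (L:ℝ) :=
        Finset.sum_congr rfl (fun m hm => by rw [hcost1 m hm])
      have eC2 : ∑ m ∈ Finset.Ico N Mn, p m * altCost N L m
          = ∑ m ∈ Finset.Ico N Mn, p m * ((L:ℝ) + 1) :=
        Finset.sum_congr rfl (fun m hm => by rw [hcost2 m hm])
      rw [eC1, eC2] at h
      rw [← Finset.sum_mul, ← Finset.sum_mul] at h
      rw [← hAp, ← hBp] at h
      linarith [h]
    have hmul : (L:ℝ) * Ap + (L:ℝ) * Bp = (L:ℝ) := by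
      rw [← mul_add, hsum1, mul_one]
    have hBpv : Bp = B := by rw [hB]; linarith [hcost, hmul]
    have hApv : Ap = 1 - B := by linarith
    -- positivity of the p-sum
    have hSp_pos : 0 < ∑ m ∈ Finset.range Mn, p m ^ α := by
      obtain ⟨m, hm, hpm⟩ := Finset.exists_lt_of_sum_lt
        (f := fun _ => (0:ℝ)) (g := p) (s := Finset.range Mn)
        (by rw [hp1]; simp)
      have h1 : 0 < p m ^ α := Real.rpow_pos_of_pos hpm α
      have h2 : ∀ i ∈ Finset.range Mn, 0 ≤ p i ^ α := fun i hi =>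
        Real.rpow_nonneg (hp0 i hi) α
      exact lt_of_lt_of_le h1 (Finset.single_le_sum h2 hm)
    rw [hrenyi p hSp_pos, hlogM]
    rw [add_comm (Real.log (Mn:ℝ))]
    apply add_le_add_left
    rcases lt_or_gt_of_ne hα1 with hαlt | hαgt
    · -- α < 1 : S_p ≤ S*, 1/(α-1) < 0
      have hle : ∑ m ∈ Finset.range Mn, p m ^ α ≤ Sstar := by
        rw [hSstar', hsplit]
        have j1 := jensen_rpow_le (Finset.range N) hne1 p hp0' hα0.le hαlt.le
        have j2 := jensen_rpow_le (Finset.Ico N Mn) hne2 p hp0'' hα0.le hαlt.le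
        rw [hcard1, ← hAp, hApv] at j1
        rw [hcard2, ← hBp, hBpv] at j2
        have e1 : c1 = (1 - B) / (N:ℝ) := by rw [hc1, hB]
        have e2 : c2 = B / ((Mn:ℝ) - N) := hc2'
        rw [e1, e2]
        exact add_le_add j1 j2
      have hinv : 1 / (α - 1) < 0 := by
        apply div_neg_of_pos_of_neg one_pos; linarith
      have := mul_le_mul_of_nonpos_left
        (Real.log_le_log hSp_pos hle) hinv.le
      linarith [this]
    · -- α > 1 : S* ≤ S_p, 1/(α-1) > 0
      have hge : Sstar ≤ ∑ m ∈ Finset.range Mn, p m ^ α := by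
        rw [hSstar', hsplit]
        have j1 := jensen_rpow_ge (Finset.range N) hne1 p hp0' hαgt.le
        have j2 := jensen_rpow_ge (Finset.Ico N Mn) hne2 p hp0'' hαgt.le
        rw [hcard1, ← hAp, hApv] at j1
        rw [hcard2, ← hBp, hBpv] at j2
        have e1 : c1 = (1 - B) / (N:ℝ) := by rw [hc1, hB]
        have e2 : c2 = B / ((Mn:ℝ) - N) := hc2'
        rw [e1, e2]
        exact add_le_add j1 j2
      have hinv : 0 < 1 / (α - 1) := by
        apply div_pos one_pos; linarith
      have := mul_le_mul_of_nonneg_left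
        (Real.log_le_log hSstarpos hge) hinv.le
      linarith [this]
  · -- the equality
    rw [hrenyi _ (by rw [hoptsum]; exact hSstarpos), hoptsum, hlogM]
    ring
end

section
/- The minimum of the Kullback–Leibler divergence Σ_{m=1}^{M} p_m log(M p_m) over all feasible distributions p for the alternative PIR scheme equals (1−L(D−1))·log((1−L(D−1))/N) + L(D−1)·log( L(D−1)/(N(L+1)^{K−1}−N) ) + log(N(L+1)^{K−1}) (with the convention 0·log 0 = 0), and this minimum is attained by q*. -/
open Finset Real

lemma kl_term_ineq (Mr p q : ℝ) (hM : 0 < Mr) (hp : 0 ≤ p) (hq : 0 ≤ q)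
    (h0 : q = 0 → p = 0) :
    p - q ≤ p * Real.log (Mr * p) - p * Real.log (Mr * q) := by
  rcases eq_or_lt_of_le hq with hq0 | hq0
  · have hp0 := h0 hq0.symm
    simp [hp0, ← hq0]
  rcases eq_or_lt_of_le hp with hp0 | hp0
  · rw [← hp0]; simp; linarith
  · have h1 : Real.log (q / p) ≤ q / p - 1 := Real.log_le_sub_one_of_pos (by positivity)
    rw [Real.log_div hq0.ne' hp0.ne'] at h1
    rw [Real.log_mul hM.ne' hp0.ne', Real.log_mul hM.ne' hq0.ne']
    have h2 : p * (q / p) = q := by field_simp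
    nlinarith [mul_le_mul_of_nonneg_left h1 hp]

/-- the minimum of the KL divergence `∑ pₘ log (M pₘ)` over feasible
distributions of the alternative PIR scheme equals
`(1-L(D-1)) log((1-L(D-1))/N) + L(D-1) log(L(D-1)/(N(L+1)^(K-1)-N)) + log(N(L+1)^(K-1))`,
attained by `q*`. -/
theorem alt_kl_tradeoff (N K L : ℕ) (hN : 3 ≤ N) (hK : 2 ≤ K)
    (hL1 : 1 ≤ L) (hL2 : L ≤ N - 2) (D : ℝ)
    (hD1 : 1 ≤ D) (hD2 : D ≤ ∑ k ∈ Finset.range K, ((N : ℝ) ^ k)⁻¹) :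
    AltFeasible N K L D (altOpt N K L D) ∧
    (∀ p : ℕ → ℝ, AltFeasible N K L D p →
      (1 - (L : ℝ) * (D - 1)) * Real.log ((1 - (L : ℝ) * (D - 1)) / N) +
        (L : ℝ) * (D - 1) *
          Real.log ((L : ℝ) * (D - 1) / ((N : ℝ) * ((L : ℝ) + 1) ^ (K - 1) - N)) +
        Real.log ((N : ℝ) * ((L : ℝ) + 1) ^ (K - 1)) ≤
        klDivUnif (N * (L + 1) ^ (K - 1)) p) ∧
    klDivUnif (N * (L + 1) ^ (K - 1)) (altOpt N K L D) =
      (1 - (L : ℝ) * (D - 1)) * Real.log ((1 - (L : ℝ) * (D - 1)) / N) +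
        (L : ℝ) * (D - 1) *
          Real.log ((L : ℝ) * (D - 1) / ((N : ℝ) * ((L : ℝ) + 1) ^ (K - 1) - N)) +
        Real.log ((N : ℝ) * ((L : ℝ) + 1) ^ (K - 1)) := by
  have hK1 : K - 1 ≠ 0 := by omega
  set Mn := N * (L + 1) ^ (K - 1) with hMn
  have hNpos : (0:ℝ) < N := by exact_mod_cast (by omega : 0 < N)
  have hLpos : (0:ℝ) < L := by exact_mod_cast (by omega : 0 < L)
  have hNM : N < Mn := by
    have h2 : 2 ≤ (L + 1) ^ (K - 1) :=
      le_trans (by omega) (Nat.le_self_pow hK1 (L + 1))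
    have := Nat.mul_le_mul_left N h2
    omega
  have hMr : (Mn:ℝ) = (N:ℝ) * ((L:ℝ) + 1) ^ (K - 1) := by rw [hMn]; push_cast; ring
  have hMnpos : (0:ℝ) < Mn := by exact_mod_cast (by omega : 0 < Mn)
  have hMNpos : (0:ℝ) < (Mn:ℝ) - N := by
    have : (N:ℝ) < Mn := by exact_mod_cast hNM
    linarith
  -- geometric bound
  have hxK : (0:ℝ) < ((N:ℝ)⁻¹) ^ K := by positivity
  have hinv : (N:ℝ)⁻¹ * N = 1 := inv_mul_cancel₀ hNpos.ne'
  have hgs : (∑ k ∈ range K, ((N:ℝ)⁻¹) ^ k) * ((N:ℝ)⁻¹ - 1) = ((N:ℝ)⁻¹) ^ K - 1 :=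
    geom_sum_mul _ K
  have hsum_eq : ∑ k ∈ range K, ((N : ℝ) ^ k)⁻¹ = ∑ k ∈ range K, ((N:ℝ)⁻¹) ^ k := by
    simp [inv_pow]
  have h' : (∑ k ∈ range K, ((N:ℝ)⁻¹) ^ k) * (1 - (N:ℝ)⁻¹) = 1 - ((N:ℝ)⁻¹) ^ K := by
    linear_combination -hgs
  have key : (∑ k ∈ range K, ((N:ℝ)⁻¹) ^ k) * ((N:ℝ) - 1) = (1 - ((N:ℝ)⁻¹) ^ K) * N := by
    linear_combination (N:ℝ) * h' + (∑ k ∈ range K, ((N:ℝ)⁻¹) ^ k) * hinv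
  have hSbound : (∑ k ∈ range K, ((N : ℝ) ^ k)⁻¹ - 1) * ((N:ℝ) - 1) < 1 := by
    rw [hsum_eq]
    nlinarith [key, mul_pos hNpos hxK]
  have hLN : (L:ℝ) ≤ (N:ℝ) - 2 := by
    have h2 : (2:ℕ) ≤ N := by omega
    have h3 : (L:ℝ) ≤ ((N - 2 : ℕ) : ℝ) := Nat.cast_le.mpr hL2
    rwa [Nat.cast_sub h2, Nat.cast_ofNat] at h3
  have hD0 : 0 ≤ D - 1 := by linarith
  have hN1 : (0:ℝ) ≤ (N:ℝ) - 1 := by linarith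
  have hc1pos : 0 < 1 - (L:ℝ) * (D - 1) := by
    nlinarith [hSbound, hD2, hD0, hLN, hN1]
  have hc2nn : 0 ≤ (L:ℝ) * (D - 1) := mul_nonneg hLpos.le hD0
  -- sum splitting helpers
  have hsplit : ∀ f : ℕ → ℝ,
      ∑ m ∈ range Mn, f m = (∑ m ∈ range N, f m) + ∑ m ∈ Ico N Mn, f m := fun f => by
    rw [range_eq_Ico, range_eq_Ico, ← Finset.sum_Ico_consecutive f (Nat.zero_le N) hNM.le]
  have hconst1 : ∀ (c : ℝ) (g : ℕ → ℝ), (∀ m < N, g m = c) →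
      ∑ m ∈ range N, g m = (N:ℝ) * c := by
    intro c g hg
    rw [Finset.sum_congr rfl fun m hm => hg m (mem_range.mp hm), Finset.sum_const,
      card_range, nsmul_eq_mul]
  have hconst2 : ∀ (c : ℝ) (g : ℕ → ℝ), (∀ m, N ≤ m → g m = c) →
      ∑ m ∈ Ico N Mn, g m = ((Mn:ℝ) - N) * c := by
    intro c g hg
    rw [Finset.sum_congr rfl fun m hm => hg m (mem_Ico.mp hm).1, Finset.sum_const,
      Nat.card_Ico, nsmul_eq_mul, Nat.cast_sub hNM.le]
  -- values of altOpt
  have hq1 : ∀ m < N, altOpt N K L D m = (1 - (L:ℝ) * (D - 1)) / N := fun m hm => by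
    simp only [altOpt, if_pos hm]
  have hq2 : ∀ m, N ≤ m → altOpt N K L D m = (L:ℝ) * (D - 1) / ((Mn:ℝ) - N) := fun m hm => by
    simp only [altOpt, if_neg (not_lt.mpr hm)]
    rw [← hMr]
  have hqnn : ∀ m ∈ range Mn, 0 ≤ altOpt N K L D m := by
    intro m _
    by_cases hm : m < N
    · rw [hq1 m hm]; exact div_nonneg hc1pos.le hNpos.le
    · rw [hq2 m (not_lt.mp hm)]; exact div_nonneg hc2nn hMNpos.le
  have hq_s1 : ∑ m ∈ range N, altOpt N K L D m = 1 - (L:ℝ) * (D - 1) := by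
    rw [hconst1 _ _ hq1]; field_simp
  have hq_s2 : ∑ m ∈ Ico N Mn, altOpt N K L D m = (L:ℝ) * (D - 1) := by
    rw [hconst2 _ _ hq2]; field_simp
  -- feasibility of altOpt
  have hfeasq : AltFeasible N K L D (altOpt N K L D) := by
    refine ⟨?_, ?_, ?_⟩
    · rw [← hMn]; exact hqnn
    · rw [← hMn, hsplit, hq_s1, hq_s2]; ring
    · rw [← hMn, hsplit,
        hconst1 ((1 - (L:ℝ) * (D - 1)) / N * L) _
          (fun m hm => by rw [hq1 m hm, altCost, if_pos hm]),
        hconst2 ((L:ℝ) * (D - 1) / ((Mn:ℝ) - N) * ((L:ℝ) + 1)) _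
          (fun m hm => by rw [hq2 m hm, altCost, if_neg (not_lt.mpr hm)])]
      field_simp
      ring
  -- value of ∑ p log(Mn q) for any p with the right marginals
  have hval : ∀ p : ℕ → ℝ,
      (∑ m ∈ range N, p m = 1 - (L:ℝ) * (D - 1)) →
      (∑ m ∈ Ico N Mn, p m = (L:ℝ) * (D - 1)) →
      ∑ m ∈ range Mn, p m * Real.log ((Mn:ℝ) * altOpt N K L D m) =
        (1 - (L : ℝ) * (D - 1)) * Real.log ((1 - (L : ℝ) * (D - 1)) / N) +
          (L : ℝ) * (D - 1) * Real.log ((L : ℝ) * (D - 1) / ((Mn:ℝ) - N)) +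
          Real.log (Mn:ℝ) := by
    intro p hp1 hp2
    rw [hsplit]
    have e1 : ∑ m ∈ range N, p m * Real.log ((Mn:ℝ) * altOpt N K L D m)
        = (1 - (L:ℝ) * (D - 1)) *
            Real.log ((Mn:ℝ) * ((1 - (L:ℝ) * (D - 1)) / N)) := by
      rw [Finset.sum_congr rfl (fun m hm => by rw [hq1 m (mem_range.mp hm)]),
        ← Finset.sum_mul, hp1]
    have e2 : ∑ m ∈ Ico N Mn, p m * Real.log ((Mn:ℝ) * altOpt N K L D m)
        = (L:ℝ) * (D - 1) *
            Real.log ((Mn:ℝ) * ((L:ℝ) * (D - 1) / ((Mn:ℝ) - N))) := by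
      rw [Finset.sum_congr rfl (fun m hm => by rw [hq2 m (mem_Ico.mp hm).1]),
        ← Finset.sum_mul, hp2]
    rw [e1, e2]
    have hla : Real.log ((Mn:ℝ) * ((1 - (L:ℝ) * (D - 1)) / N))
        = Real.log ((1 - (L:ℝ) * (D - 1)) / N) + Real.log (Mn:ℝ) := by
      rw [Real.log_mul hMnpos.ne' (ne_of_gt (div_pos hc1pos hNpos))]; ring
    rcases eq_or_lt_of_le hc2nn with hc20 | hc2pos
    · rw [← hc20]
      simp only [sub_zero, mul_zero, zero_mul, zero_div, zero_add, add_zero, one_mul]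
      rw [Real.log_mul hMnpos.ne' (ne_of_gt (div_pos one_pos hNpos))]
      ring
    · have hlb : Real.log ((Mn:ℝ) * ((L:ℝ) * (D - 1) / ((Mn:ℝ) - N)))
          = Real.log ((L:ℝ) * (D - 1) / ((Mn:ℝ) - N)) + Real.log (Mn:ℝ) := by
        rw [Real.log_mul hMnpos.ne' (ne_of_gt (div_pos hc2pos hMNpos))]; ring
      rw [hla, hlb]; ring
  -- marginals of any feasible p
  have hmarg : ∀ p : ℕ → ℝ, AltFeasible N K L D p →
      (∑ m ∈ range N, p m = 1 - (L:ℝ) * (D - 1)) ∧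
      (∑ m ∈ Ico N Mn, p m = (L:ℝ) * (D - 1)) := by
    intro p hp
    obtain ⟨hp0, hp1, hp2⟩ := hp
    rw [← hMn] at hp1 hp2
    have hs : (∑ m ∈ range N, p m) + ∑ m ∈ Ico N Mn, p m = 1 := by
      rw [← hsplit]; exact hp1
    have hcost : ∑ m ∈ range Mn, p m * altCost N L m
        = (∑ m ∈ range N, p m) * (L:ℝ) + (∑ m ∈ Ico N Mn, p m) * ((L:ℝ) + 1) := by
      rw [hsplit, Finset.sum_mul, Finset.sum_mul]
      congr 1
      · exact Finset.sum_congr rfl fun m hm => by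
          rw [altCost, if_pos (mem_range.mp hm)]
      · exact Finset.sum_congr rfl fun m hm => by
          rw [altCost, if_neg (not_lt.mpr (mem_Ico.mp hm).1)]
    rw [hcost] at hp2
    have hp2' : (∑ m ∈ range N, p m) * (L:ℝ) + (∑ m ∈ Ico N Mn, p m) * ((L:ℝ) + 1)
        = D * L := by
      field_simp at hp2
      linear_combination hp2
    constructor
    · linear_combination ((L:ℝ) + 1) * hs - hp2'
    · linear_combination hp2' - (L:ℝ) * hs
  refine ⟨hfeasq, ?_, ?_⟩
  · -- lower bound
    intro p hp
    obtain ⟨hS1, hS2⟩ := hmarg p hp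
    obtain ⟨hp0, hp1, -⟩ := hp
    rw [← hMn] at hp0 hp1
    have hterm : ∀ m ∈ range Mn,
        p m - altOpt N K L D m ≤
          p m * Real.log ((Mn:ℝ) * p m) - p m * Real.log ((Mn:ℝ) * altOpt N K L D m) := by
      intro m hm
      apply kl_term_ineq _ _ _ hMnpos (hp0 m hm) (hqnn m hm)
      intro hq0
      by_cases hmN : m < N
      · exfalso
        rw [hq1 m hmN] at hq0
        have := div_pos hc1pos hNpos
        linarith
      · push_neg at hmN
        rw [hq2 m hmN] at hq0
        have hc20 : (L:ℝ) * (D - 1) = 0 := by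
          rcases div_eq_zero_iff.mp hq0 with h | h
          · exact h
          · exact absurd h hMNpos.ne'
        have hnn : ∀ x ∈ Ico N Mn, 0 ≤ p x := fun x hx =>
          hp0 x (mem_range.mpr (mem_Ico.mp hx).2)
        have hz : ∑ x ∈ Ico N Mn, p x = 0 := by rw [hS2, hc20]
        exact (Finset.sum_eq_zero_iff_of_nonneg hnn).mp hz m
          (mem_Ico.mpr ⟨hmN, mem_range.mp hm⟩)
    have hsum_ineq := Finset.sum_le_sum hterm
    rw [Finset.sum_sub_distrib, Finset.sum_sub_distrib] at hsum_ineq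
    have hq_tot : ∑ m ∈ range Mn, altOpt N K L D m = 1 := by
      rw [hsplit, hq_s1, hq_s2]; ring
    have hpv := hval p hS1 hS2
    simp only [klDivUnif]
    rw [← hMr]
    linarith [hsum_ineq, hpv, hp1, hq_tot]
  · -- value at altOpt
    simp only [klDivUnif]
    rw [← hMr]
    exact hval (altOpt N K L D) hq_s1 hq_s2
end

section
/- The minimum of log( N(L+1)^{K−1} · max_{m ∈ {1,…,M}} p_m ) over all feasible distributions p for the alternative PIR scheme equals log((1−L(D−1))/N) + log(N(L+1)^{K−1}). -/
open Finset Real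

/-- the minimum of `log (N(L+1)^(K-1) · max_m pₘ)` over feasible
distributions of the alternative PIR scheme equals
`log((1-L(D-1))/N) + log(N(L+1)^(K-1))`. -/
theorem alt_infty_tradeoff (N K L : ℕ) (hN : 3 ≤ N) (hK : 2 ≤ K)
    (hL1 : 1 ≤ L) (hL2 : L ≤ N - 2) (D : ℝ)
    (hD1 : 1 ≤ D) (hD2 : D ≤ ∑ k ∈ Finset.range K, ((N : ℝ) ^ k)⁻¹) :
    IsLeast
      {v : ℝ | ∃ p : ℕ → ℝ, AltFeasible N K L D p ∧
        v = Real.log ((N : ℝ) * ((L : ℝ) + 1) ^ (K - 1) *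
          maxOver (N * (L + 1) ^ (K - 1))
            (Nat.mul_ne_zero (show N ≠ 0 by omega)
              (pow_ne_zero (K - 1) (show L + 1 ≠ 0 by omega))) p)}
      (Real.log ((1 - (L : ℝ) * (D - 1)) / N) +
        Real.log ((N : ℝ) * ((L : ℝ) + 1) ^ (K - 1))) := by
  have hNR : (3:ℝ) ≤ (N:ℝ) := by exact_mod_cast hN
  have hN0 : (0:ℝ) < (N:ℝ) := by linarith
  have hLR : (1:ℝ) ≤ (L:ℝ) := by exact_mod_cast hL1
  have hL0 : (L:ℝ) ≠ 0 := by positivity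
  have hLN : (L:ℝ) + 1 ≤ (N:ℝ) := by
    have h : L + 1 ≤ N := by omega
    exact_mod_cast h
  set T : ℝ := ((L:ℝ)+1)^(K-1) with hTdef
  have hT1 : (2:ℝ) ≤ T := by
    have h2 : (2:ℝ) ≤ (L:ℝ)+1 := by linarith
    calc (2:ℝ) ≤ (L:ℝ)+1 := h2
    _ ≤ T := le_self_pow₀ (by linarith) (by omega)
  have hT0 : (0:ℝ) < T := by linarith
  set M := N * (L + 1) ^ (K - 1) with hMdef
  have hMR : (M:ℝ) = (N:ℝ) * T := by rw [hMdef, hTdef]; push_cast; ring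
  have hNM : N < M := by
    rw [hMdef]
    have h2 : 1 < (L+1)^(K-1) := Nat.one_lt_pow (by omega) (by omega)
    exact (Nat.lt_mul_iff_one_lt_right (by omega)).mpr h2
  have hMne : M ≠ 0 := by omega
  set s : ℝ := (L:ℝ) * (D - 1) with hsdef
  have hs0 : 0 ≤ s := mul_nonneg (by linarith) (by linarith)
  -- key bound : s ≤ 1 - T⁻¹
  have hkey : s ≤ 1 - T⁻¹ := by
    have hD2' : D - 1 ≤ ∑ k ∈ Finset.Ico 1 K, ((N : ℝ) ^ k)⁻¹ := by
      have hsplit : ∑ k ∈ Finset.range K, ((N : ℝ) ^ k)⁻¹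
          = ((N:ℝ)^0)⁻¹ + ∑ k ∈ Finset.Ico 1 K, ((N : ℝ) ^ k)⁻¹ := by
        rw [Finset.range_eq_Ico]
        exact Finset.sum_eq_sum_Ico_succ_bot (by omega) _
      simp only [pow_zero, inv_one] at hsplit
      linarith [hD2, hsplit]
    have hterm : ∀ k ∈ Finset.Ico 1 K, (L:ℝ) * ((N : ℝ) ^ k)⁻¹
        ≤ (((L:ℝ)+1)^(k-1))⁻¹ - (((L:ℝ)+1)^k)⁻¹ := by
      intro k hk
      obtain ⟨hk1, hk2⟩ := Finset.mem_Ico.mp hk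
      have hLp0 : (0:ℝ) < (L:ℝ)+1 := by linarith
      have hpow : ((L:ℝ)+1)^k = ((L:ℝ)+1)^(k-1) * ((L:ℝ)+1) := by
        rw [← pow_succ]
        congr 1
        omega
      have hNk : ((L:ℝ)+1)^k ≤ (N:ℝ)^k := pow_le_pow_left₀ (by linarith) hLN k
      have hLk0 : (0:ℝ) < ((L:ℝ)+1)^k := by positivity
      have hNk0 : (0:ℝ) < (N:ℝ)^k := by positivity
      have h1 : (((L:ℝ)+1)^(k-1))⁻¹ - (((L:ℝ)+1)^k)⁻¹ = (L:ℝ) * (((L:ℝ)+1)^k)⁻¹ := by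
        rw [hpow]
        field_simp
        ring
      rw [h1]
      have hinv : ((N : ℝ) ^ k)⁻¹ ≤ (((L:ℝ)+1)^k)⁻¹ := inv_anti₀ hLk0 hNk
      exact mul_le_mul_of_nonneg_left hinv (by linarith)
    have htel : ∑ k ∈ Finset.Ico 1 K, ((((L:ℝ)+1)^(k-1))⁻¹ - (((L:ℝ)+1)^k)⁻¹)
        = 1 - T⁻¹ := by
      rw [Finset.sum_Ico_eq_sum_range]
      have h : ∀ i ∈ Finset.range (K-1), (((L:ℝ)+1)^(1+i-1))⁻¹ - (((L:ℝ)+1)^(1+i))⁻¹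
          = (((L:ℝ)+1)^i)⁻¹ - (((L:ℝ)+1)^(i+1))⁻¹ := by
        intro i _
        have e1 : 1 + i - 1 = i := by omega
        have e2 : 1 + i = i + 1 := by omega
        rw [e1, e2]
      rw [Finset.sum_congr rfl h,
        Finset.sum_range_sub' (fun j => (((L:ℝ)+1)^j)⁻¹) (K-1)]
      simp [hTdef]
    calc s = (L:ℝ) * (D - 1) := hsdef
    _ ≤ (L:ℝ) * ∑ k ∈ Finset.Ico 1 K, ((N : ℝ) ^ k)⁻¹ :=
        mul_le_mul_of_nonneg_left hD2' (by linarith)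
    _ = ∑ k ∈ Finset.Ico 1 K, (L:ℝ) * ((N : ℝ) ^ k)⁻¹ := Finset.mul_sum _ _ _
    _ ≤ ∑ k ∈ Finset.Ico 1 K, ((((L:ℝ)+1)^(k-1))⁻¹ - (((L:ℝ)+1)^k)⁻¹) :=
        Finset.sum_le_sum hterm
    _ = 1 - T⁻¹ := htel
  have hTinv : (0:ℝ) < T⁻¹ := by positivity
  have hs1 : s < 1 := by linarith
  set a : ℝ := (1 - s) / N with hadef
  have ha0 : 0 < a := div_pos (by linarith) hN0
  set bden : ℝ := (N:ℝ) * ((L:ℝ)+1)^(K-1) - (N:ℝ) with hbdendef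
  have hbden0 : (0:ℝ) < bden := by
    rw [hbdendef, ← hTdef]
    nlinarith
  set b : ℝ := s / bden with hbdef
  have hb0 : 0 ≤ b := div_nonneg hs0 hbden0.le
  have hab : b ≤ a := by
    rw [hbdef, hadef, div_le_div_iff₀ hbden0 hN0]
    have hsT : s * T ≤ T - 1 := by
      have h := mul_le_mul_of_nonneg_right hkey hT0.le
      rw [sub_mul, one_mul, inv_mul_cancel₀ (ne_of_gt hT0)] at h
      linarith
    have hbd : bden = (N:ℝ) * (T - 1) := by rw [hbdendef, ← hTdef]; ring
    rw [hbd]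
    nlinarith
  have hopt : ∀ m, altOpt N K L D m = if m < N then a else b := fun m => rfl
  have hsplit : ∀ f : ℕ → ℝ, ∑ m ∈ Finset.range M, f m =
      (∑ m ∈ Finset.range N, f m) + ∑ m ∈ Finset.Ico N M, f m := by
    intro f
    rw [Finset.range_eq_Ico, Finset.range_eq_Ico]
    exact (Finset.sum_Ico_consecutive f (Nat.zero_le N) hNM.le).symm
  have hcardIco : ((M - N : ℕ) : ℝ) = bden := by
    rw [Nat.cast_sub hNM.le, hMR, hbdendef, hTdef]
  -- value of sums for altOpt
  have hsumN : ∑ m ∈ Finset.range N, altOpt N K L D m = 1 - s := by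
    have h : ∀ m ∈ Finset.range N, altOpt N K L D m = a := by
      intro m hm
      rw [hopt m, if_pos (Finset.mem_range.mp hm)]
    rw [Finset.sum_congr rfl h, Finset.sum_const, Finset.card_range, nsmul_eq_mul, hadef]
    field_simp
  have hsumIco : ∑ m ∈ Finset.Ico N M, altOpt N K L D m = s := by
    have h : ∀ m ∈ Finset.Ico N M, altOpt N K L D m = b := by
      intro m hm
      rw [hopt m, if_neg (Nat.not_lt.mpr (Finset.mem_Ico.mp hm).1)]
    rw [Finset.sum_congr rfl h, Finset.sum_const, Nat.card_Ico, nsmul_eq_mul, hcardIco,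
      hbdef]
    field_simp
  -- cost split identity for any p
  have hcostsplit : ∀ p : ℕ → ℝ, ∑ m ∈ Finset.range M, p m * altCost N L m
      = (L:ℝ) * (∑ m ∈ Finset.range N, p m) + ((L:ℝ)+1) * (∑ m ∈ Finset.Ico N M, p m) := by
    intro p
    rw [hsplit (fun m => p m * altCost N L m)]
    congr 1
    · rw [Finset.mul_sum]
      refine Finset.sum_congr rfl fun m hm => ?_
      rw [altCost, if_pos (Finset.mem_range.mp hm)]
      ring
    · rw [Finset.mul_sum]
      refine Finset.sum_congr rfl fun m hm => ?_
      rw [altCost, if_neg (Nat.not_lt.mpr (Finset.mem_Ico.mp hm).1)]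
      ring
  have hNT0 : (0:ℝ) < (N:ℝ) * ((L:ℝ)+1)^(K-1) := by rw [← hTdef]; positivity
  have hlogsplit : Real.log ((N:ℝ) * ((L:ℝ)+1)^(K-1) * a)
      = Real.log ((1 - (L:ℝ) * (D - 1)) / N) + Real.log ((N:ℝ) * ((L:ℝ)+1)^(K-1)) := by
    rw [Real.log_mul (ne_of_gt hNT0) (ne_of_gt ha0), add_comm]
  constructor
  · refine ⟨altOpt N K L D, ⟨?_, ?_, ?_⟩, ?_⟩
    · intro m hm
      rw [hopt m]
      split
      · exact ha0.le
      · exact hb0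
    · show ∑ m ∈ Finset.range M, altOpt N K L D m = 1
      rw [hsplit, hsumN, hsumIco]
      ring
    · show (1 / (L:ℝ)) * (∑ m ∈ Finset.range M, altOpt N K L D m * altCost N L m) = D
      rw [hcostsplit, hsumN, hsumIco]
      field_simp
      linarith [hsdef]
    · show _ = Real.log ((N:ℝ) * ((L:ℝ)+1)^(K-1) * maxOver M hMne (altOpt N K L D))
      have hmax : maxOver M hMne (altOpt N K L D) = a := by
        apply le_antisymm
        · apply Finset.sup'_le
          intro m hm
          rw [hopt m]
          split
          · exact le_refl a
          · exact hab
        · have h0 : (0:ℕ) ∈ Finset.range M := Finset.mem_range.mpr (by omega)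
          have h := Finset.le_sup' (altOpt N K L D) h0
          rwa [hopt 0, if_pos (by omega)] at h
      rw [hmax, hlogsplit]
  · rintro v ⟨p, ⟨hp0, hp1, hp2⟩, rfl⟩
    have hp1' : ∑ m ∈ Finset.range M, p m = 1 := hp1
    have hp2' : (1 / (L:ℝ)) * (∑ m ∈ Finset.range M, p m * altCost N L m) = D := hp2
    have hScost : ∑ m ∈ Finset.range M, p m * altCost N L m = (L:ℝ) * D := by
      field_simp at hp2'
      linarith [hp2']
    have hAB : (∑ m ∈ Finset.range N, p m) + ∑ m ∈ Finset.Ico N M, p m = 1 := by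
      rw [← hsplit]
      exact hp1'
    have hcs := hScost
    rw [hcostsplit] at hcs
    have h3 : (L:ℝ) * (∑ m ∈ Finset.range N, p m) + (L:ℝ) * (∑ m ∈ Finset.Ico N M, p m)
        = (L:ℝ) := by rw [← mul_add, hAB, mul_one]
    have hB : ∑ m ∈ Finset.Ico N M, p m = s := by
      have hs' : s = (L:ℝ) * D - L := by rw [hsdef]; ring
      linarith [hcs, h3, hs']
    have hA : ∑ m ∈ Finset.range N, p m = 1 - s := by linarith
    have hmxge : a ≤ maxOver M hMne p := by
      have hle : ∀ m ∈ Finset.range N, p m ≤ maxOver M hMne p := by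
        intro m hm
        exact Finset.le_sup' p (Finset.mem_range.mpr (lt_of_lt_of_le
          (Finset.mem_range.mp hm) hNM.le))
      have hsum : (1 - s) ≤ (N:ℝ) * maxOver M hMne p := by
        calc (1 - s) = ∑ m ∈ Finset.range N, p m := hA.symm
        _ ≤ ∑ m ∈ Finset.range N, maxOver M hMne p := Finset.sum_le_sum hle
        _ = (N:ℝ) * maxOver M hMne p := by
            rw [Finset.sum_const, Finset.card_range, nsmul_eq_mul]
      rw [hadef, div_le_iff₀ hN0]
      linarith
    show Real.log ((1 - (L:ℝ) * (D - 1)) / N) + Real.log ((N:ℝ) * ((L:ℝ)+1)^(K-1))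
        ≤ Real.log ((N:ℝ) * ((L:ℝ)+1)^(K-1) * maxOver M hMne p)
    rw [← hlogsplit]
    exact Real.log_le_log (mul_pos hNT0 ha0) (mul_le_mul_of_nonneg_left hmxge hNT0.le)
end

section
/- The uniform distribution p_m = 1/M on the M = N(L+1)^{K−1} options of the alternative PIR scheme has expected normalized download cost (1/L) Σ_{m=1}^{M} (1/M) d_m = 1 + (1 − (L+1)^{1−K})/L, and this value is strictly greater than Σ_{k=0}^{K-1} N^{-k}; hence the alternative scheme with perfect privacy cannot achieve the PIR capacity. -/
open Finset Real

/-- the uniform distribution on the `M = N(L+1)^(K-1)` options of the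
alternative PIR scheme has expected normalized download cost `1 + (1-(L+1)^(1-K))/L`,
which is strictly greater than the reciprocal `∑_{k<K} N^{-k}` of the PIR capacity;
hence the alternative scheme with perfect privacy cannot achieve the PIR capacity. -/
theorem alt_uniform_cost (N K L : ℕ) (hN : 3 ≤ N) (hK : 2 ≤ K)
    (hL1 : 1 ≤ L) (hL2 : L ≤ N - 2) :
    (1 / (L : ℝ)) * (∑ m ∈ Finset.range (N * (L + 1) ^ (K - 1)),
        (1 / ((N : ℝ) * ((L : ℝ) + 1) ^ (K - 1))) * altCost N L m) =
      1 + (1 - ((L : ℝ) + 1) ^ ((1 : ℤ) - (K : ℤ))) / L ∧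
    (∑ k ∈ Finset.range K, ((N : ℝ) ^ k)⁻¹) <
      1 + (1 - ((L : ℝ) + 1) ^ ((1 : ℤ) - (K : ℤ))) / L := by

  have hLN : L + 2 ≤ N := by omega
  have hL0 : (0:ℝ) < L := by exact_mod_cast hL1
  have hx0 : (0:ℝ) < (L:ℝ) + 1 := by linarith
  have hN0 : (0:ℝ) < N := by positivity
  have hxN : (L:ℝ) + 1 < N := by
    have : ((L:ℝ) + 2) ≤ N := by exact_mod_cast hLN
    linarith
  set M := N * (L + 1) ^ (K - 1) with hM
  have hNleM : N ≤ M := Nat.le_mul_of_pos_right _ (pow_pos (by omega) _)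
  have hMcast : (M:ℝ) = (N:ℝ) * ((L:ℝ) + 1) ^ (K - 1) := by push_cast [hM]; ring
  have hz : ((L:ℝ)+1) ^ ((1:ℤ) - (K:ℤ)) = (((L:ℝ)+1) ^ (K-1 : ℕ))⁻¹ := by
    rw [show (1:ℤ) - (K:ℤ) = -((K-1 : ℕ):ℤ) by push_cast; omega, zpow_neg, zpow_natCast]
  have hsum : ∑ m ∈ Finset.range M, altCost N L m = (M:ℝ) * ((L:ℝ)+1) - N := by
    rw [Finset.range_eq_Ico, ← Finset.sum_Ico_consecutive _ (Nat.zero_le N) hNleM]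
    have h1 : ∑ m ∈ Finset.Ico 0 N, altCost N L m = (N:ℝ) * L := by
      have h : ∀ m ∈ Finset.Ico 0 N, altCost N L m = (L:ℝ) := fun m hm => by
        simp only [altCost, if_pos (Finset.mem_Ico.mp hm).2]
      rw [Finset.sum_congr rfl h, Finset.sum_const, Nat.card_Ico, Nat.sub_zero,
        nsmul_eq_mul]
    have h2 : ∑ m ∈ Finset.Ico N M, altCost N L m = ((M:ℝ) - N) * ((L:ℝ)+1) := by
      have h : ∀ m ∈ Finset.Ico N M, altCost N L m = (L:ℝ) + 1 := fun m hm => by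
        simp only [altCost, if_neg (Nat.not_lt.mpr (Finset.mem_Ico.mp hm).1)]
      rw [Finset.sum_congr rfl h, Finset.sum_const, Nat.card_Ico, nsmul_eq_mul,
        Nat.cast_sub hNleM]
    rw [h1, h2]; ring
  have hpow0 : (((L:ℝ)+1) ^ (K-1 : ℕ)) ≠ 0 := by positivity
  constructor
  · rw [← Finset.mul_sum, hsum, hz, hMcast]
    field_simp
    ring
  · have key : (1:ℝ) + (1 - ((L:ℝ) + 1) ^ ((1:ℤ) - (K:ℤ))) / L
        = ∑ k ∈ Finset.range K, ((((L:ℝ)+1)) ^ k)⁻¹ := by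
      simp_rw [← inv_pow]
      rw [geom_sum_eq (by
        intro h
        have : (L:ℝ) + 1 = 1 := by
          field_simp at h; linarith
        linarith) K, hz]
      rw [show K = (K-1)+1 by omega, pow_succ]
      have hne : (((L:ℝ)+1))⁻¹ - 1 ≠ 0 := by
        intro h
        have : ((L:ℝ)+1)⁻¹ = 1 := by linarith
        rw [inv_eq_one] at this
        linarith
      simp only [Nat.add_sub_cancel, inv_pow]
      have hLi : (L:ℝ) * (L:ℝ)⁻¹ = 1 := mul_inv_cancel₀ hL0.ne'
      field_simp
      linear_combination (1 - ((L:ℝ)+1)^(K-1) - (L:ℝ)*((L:ℝ)+1)^(K-1)) * hLi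
    rw [key]
    apply Finset.sum_lt_sum
    · intro k hk
      apply inv_anti₀ (by positivity)
      exact pow_le_pow_left₀ (by linarith) (by linarith) k
    · exact ⟨1, Finset.mem_range.mpr (by omega), by
        simp only [pow_one]
        exact inv_strictAnti₀ hx0 hxN⟩
end

section
/- At download cost D = 1, the minimal information leakage of the alternative PIR scheme is strictly smaller than that of the symmetric TSC scheme: for every α ∈ (0,∞) with α ≠ 1, the minimum over feasible distributions of the alternative scheme of D_α(p‖U_alt) equals (K−1)·log(L+1), the minimum over feasible distributions of the symmetric TSC scheme of D_α(p‖U_TSC) equals (K−1)·log N, and (K−1)·log(L+1) < (K−1)·log N. -/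
open Finset Real

namespace AltTSCAux
open Finset Real

lemma sum_ite_lt (M n : ℕ) (hnM : n ≤ M) (f : ℕ → ℝ) :
    ∑ m ∈ Finset.range M, (if m < n then f m else 0) = ∑ m ∈ Finset.range n, f m := by
  rw [← Finset.sum_subset (Finset.range_subset_range.mpr hnM)
    (fun x _ hx => by
      rw [if_neg]
      simpa using hx)]
  exact Finset.sum_congr rfl fun m hm => if_pos (Finset.mem_range.mp hm)

lemma npow_mul_inv_rpow (n : ℕ) (hn : 0 < n) (α : ℝ) :
    (n : ℝ) * ((n : ℝ)⁻¹) ^ α = (n : ℝ) ^ ((1:ℝ) - α) := by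
  have hn' : (0:ℝ) < n := by exact_mod_cast hn
  rw [Real.rpow_sub hn', Real.rpow_one, Real.inv_rpow hn'.le, div_eq_mul_inv]

lemma val_eq (n M : ℕ) (hn : 0 < n) (hM : 0 < M) (α : ℝ) (hα1 : α ≠ 1) :
    (1 / (α - 1)) * Real.log ((M : ℝ) ^ (α - 1) * (n : ℝ) ^ ((1:ℝ) - α))
      = Real.log M - Real.log n := by
  have hn' : (0:ℝ) < n := by exact_mod_cast hn
  have hM' : (0:ℝ) < M := by exact_mod_cast hM
  have h1 : α - 1 ≠ 0 := sub_ne_zero.mpr hα1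
  rw [Real.log_mul (Real.rpow_pos_of_pos hM' _).ne' (Real.rpow_pos_of_pos hn' _).ne',
    Real.log_rpow hM', Real.log_rpow hn']
  field_simp
  ring

lemma sum_rpow_uniform (n M : ℕ) (hn : 0 < n) (hnM : n ≤ M) (α : ℝ) (hα0 : 0 < α) :
    ∑ m ∈ Finset.range M, (if m < n then (n:ℝ)⁻¹ else 0) ^ α = (n : ℝ) ^ ((1:ℝ) - α) := by
  have : ∀ m ∈ Finset.range M, (if m < n then (n:ℝ)⁻¹ else 0) ^ α
      = (if m < n then ((n:ℝ)⁻¹) ^ α else 0) := by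
    intro m _
    split <;> simp [Real.zero_rpow hα0.ne']
  rw [Finset.sum_congr rfl this, sum_ite_lt M n hnM, Finset.sum_const, Finset.card_range,
    nsmul_eq_mul, npow_mul_inv_rpow n hn α]

lemma sum_rpow_lb (n : ℕ) (hn : 0 < n) (α : ℝ) (hα : 1 < α) (p : ℕ → ℝ)
    (hp0 : ∀ m ∈ Finset.range n, 0 ≤ p m) (hp1 : ∑ m ∈ Finset.range n, p m = 1) :
    (n : ℝ) ^ ((1:ℝ) - α) ≤ ∑ m ∈ Finset.range n, p m ^ α := by
  have hn' : (0:ℝ) < n := by exact_mod_cast hn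
  have hw : ∑ _i ∈ Finset.range n, (n:ℝ)⁻¹ = 1 := by
    rw [Finset.sum_const, Finset.card_range, nsmul_eq_mul, mul_inv_cancel₀ hn'.ne']
  have key := Real.rpow_arith_mean_le_arith_mean_rpow (Finset.range n)
    (fun _ => (n:ℝ)⁻¹) p (fun i _ => by positivity) hw hp0 hα.le
  rw [← Finset.mul_sum, ← Finset.mul_sum, hp1, mul_one] at key
  calc (n : ℝ) ^ ((1:ℝ) - α) = (n:ℝ) * ((n:ℝ)⁻¹) ^ α := (npow_mul_inv_rpow n hn α).symm
    _ ≤ (n:ℝ) * ((n:ℝ)⁻¹ * ∑ m ∈ Finset.range n, p m ^ α) :=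
        mul_le_mul_of_nonneg_left key hn'.le
    _ = ∑ m ∈ Finset.range n, p m ^ α := by
        rw [← mul_assoc, mul_inv_cancel₀ hn'.ne', one_mul]

lemma sum_rpow_ub (n : ℕ) (hn : 0 < n) (α : ℝ) (hα0 : 0 < α) (hα : α < 1) (p : ℕ → ℝ)
    (hp0 : ∀ m ∈ Finset.range n, 0 ≤ p m) (hp1 : ∑ m ∈ Finset.range n, p m = 1) :
    ∑ m ∈ Finset.range n, p m ^ α ≤ (n : ℝ) ^ ((1:ℝ) - α) := by
  have hn' : (0:ℝ) < n := by exact_mod_cast hn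
  have hw : ∑ _i ∈ Finset.range n, (n:ℝ)⁻¹ = 1 := by
    rw [Finset.sum_const, Finset.card_range, nsmul_eq_mul, mul_inv_cancel₀ hn'.ne']
  have hp : (1:ℝ) ≤ 1 / α := (le_div_iff₀ hα0).mpr (by linarith)
  have key := Real.arith_mean_le_rpow_mean (Finset.range n)
    (fun _ => (n:ℝ)⁻¹) (fun m => p m ^ α) (fun i _ => by positivity) hw
    (fun i hi => Real.rpow_nonneg (hp0 i hi) α) hp
  have hsimp : ∀ m ∈ Finset.range n, (n:ℝ)⁻¹ * (p m ^ α) ^ ((1:ℝ)/α)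
      = (n:ℝ)⁻¹ * p m := by
    intro m hm
    rw [one_div, Real.rpow_rpow_inv (hp0 m hm) hα0.ne']
  rw [Finset.sum_congr rfl hsimp] at key
  simp only [← Finset.mul_sum] at key
  rw [hp1, mul_one, one_div_one_div] at key
  have key2 : (n:ℝ)⁻¹ * ∑ m ∈ Finset.range n, p m ^ α ≤ ((n:ℝ)⁻¹) ^ α := key
  calc ∑ m ∈ Finset.range n, p m ^ α
      = (n:ℝ) * ((n:ℝ)⁻¹ * ∑ m ∈ Finset.range n, p m ^ α) := by
        rw [← mul_assoc, mul_inv_cancel₀ hn'.ne', one_mul]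
    _ ≤ (n:ℝ) * ((n:ℝ)⁻¹) ^ α := mul_le_mul_of_nonneg_left key2 hn'.le
    _ = (n : ℝ) ^ ((1:ℝ) - α) := npow_mul_inv_rpow n hn α

lemma isLeast_general (n M : ℕ) (hn : 0 < n) (hnM : n ≤ M) (c : ℝ) (hc : 0 < c)
    (cost : ℕ → ℝ) (hcost : ∀ m, cost m = if m < n then c else c + 1)
    (α : ℝ) (hα0 : 0 < α) (hα1 : α ≠ 1) :
    IsLeast {v : ℝ | ∃ p : ℕ → ℝ,
        ((∀ m ∈ Finset.range M, 0 ≤ p m) ∧ (∑ m ∈ Finset.range M, p m = 1) ∧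
          (1 / c) * (∑ m ∈ Finset.range M, p m * cost m) = 1) ∧
        v = renyiDiv M α p}
      (Real.log M - Real.log n) := by
  have hM : 0 < M := lt_of_lt_of_le hn hnM
  have hn' : (0:ℝ) < n := by exact_mod_cast hn
  have hM' : (0:ℝ) < M := by exact_mod_cast hM
  have h1 : α - 1 ≠ 0 := sub_ne_zero.mpr hα1
  constructor
  · -- membership: the uniform distribution on the first n options
    refine ⟨fun m => if m < n then (n:ℝ)⁻¹ else 0, ⟨?_, ?_, ?_⟩, ?_⟩
    · intro m _
      dsimp only
      split <;> positivity
    · rw [sum_ite_lt M n hnM, Finset.sum_const, Finset.card_range, nsmul_eq_mul,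
        mul_inv_cancel₀ hn'.ne']
    · have : ∀ m ∈ Finset.range M, (if m < n then (n:ℝ)⁻¹ else 0) * cost m
          = (if m < n then (n:ℝ)⁻¹ * c else 0) := by
        intro m _
        rw [hcost m]
        split <;> simp
      rw [Finset.sum_congr rfl this, sum_ite_lt M n hnM, Finset.sum_const,
        Finset.card_range, nsmul_eq_mul]
      field_simp
    · rw [renyiDiv, sum_rpow_uniform n M hn hnM α hα0, val_eq n M hn hM α hα1]
  · -- lower bound
    rintro v ⟨p, ⟨hp0, hp1, hpc⟩, rfl⟩
    -- the expensive options have probability zero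
    have hT : ∑ m ∈ Finset.range M, p m * cost m = c := by
      field_simp at hpc
      linarith [hpc]
    have hzero : ∀ m ∈ Finset.range M, n ≤ m → p m = 0 := by
      have hsum0 : ∑ m ∈ Finset.range M, (p m * cost m - p m * c) = 0 := by
        rw [Finset.sum_sub_distrib, hT, ← Finset.sum_mul, hp1, one_mul, sub_self]
      have hnonneg : ∀ m ∈ Finset.range M, 0 ≤ p m * cost m - p m * c := by
        intro m hm
        rw [hcost m]
        split
        · simp
        · have := hp0 m hm
          nlinarith
      have heach := (Finset.sum_eq_zero_iff_of_nonneg hnonneg).mp hsum0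
      intro m hm hmn
      have h := heach m hm
      rw [hcost m, if_neg (not_lt.mpr hmn)] at h
      nlinarith [h]
    -- restrict sums to the first n options
    have hp1n : ∑ m ∈ Finset.range n, p m = 1 := by
      rw [Finset.sum_subset (Finset.range_subset_range.mpr hnM)
        (fun x hx hx' => hzero x hx (by simpa using hx'))]
      exact hp1
    have hp0n : ∀ m ∈ Finset.range n, 0 ≤ p m :=
      fun m hm => hp0 m (Finset.mem_range.mpr (lt_of_lt_of_le (Finset.mem_range.mp hm) hnM))
    have hSeq : ∑ m ∈ Finset.range M, p m ^ α = ∑ m ∈ Finset.range n, p m ^ α := by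
      rw [Finset.sum_subset (Finset.range_subset_range.mpr hnM)
        (fun x hx hx' => by
          rw [hzero x hx (by simpa using hx'), Real.zero_rpow hα0.ne'])]
    have hSpos : 0 < ∑ m ∈ Finset.range n, p m ^ α := by
      obtain ⟨m, hm, hmp⟩ : ∃ m ∈ Finset.range n, 0 < p m := by
        by_contra h
        push_neg at h
        have : ∑ m ∈ Finset.range n, p m = 0 :=
          Finset.sum_eq_zero fun m hm => le_antisymm (h m hm) (hp0n m hm)
        rw [hp1n] at this
        norm_num at this
      exact lt_of_lt_of_le (Real.rpow_pos_of_pos hmp α)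
        (Finset.single_le_sum (fun i hi => Real.rpow_nonneg (hp0n i hi) α) hm)
    rw [renyiDiv, hSeq, ← val_eq n M hn hM α hα1]
    rcases lt_or_gt_of_ne hα1 with hlt | hgt
    · -- α < 1 : 1/(α-1) < 0, sum is ≤ n^(1-α)
      have hS := sum_rpow_ub n hn α hα0 hlt p hp0n hp1n
      have hlog : Real.log ((M : ℝ) ^ (α - 1) * ∑ m ∈ Finset.range n, p m ^ α)
          ≤ Real.log ((M : ℝ) ^ (α - 1) * (n : ℝ) ^ ((1:ℝ) - α)) :=
        Real.log_le_log (mul_pos (Real.rpow_pos_of_pos hM' _) hSpos)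
          (mul_le_mul_of_nonneg_left hS (Real.rpow_pos_of_pos hM' _).le)
      have hneg : 1 / (α - 1) ≤ 0 := by
        apply div_nonpos_of_nonneg_of_nonpos <;> linarith
      exact mul_le_mul_of_nonpos_left hlog hneg
    · -- α > 1
      have hS := sum_rpow_lb n hn α hgt p hp0n hp1n
      have hlog : Real.log ((M : ℝ) ^ (α - 1) * (n : ℝ) ^ ((1:ℝ) - α))
          ≤ Real.log ((M : ℝ) ^ (α - 1) * ∑ m ∈ Finset.range n, p m ^ α) :=
        Real.log_le_log (by positivity)
          (mul_le_mul_of_nonneg_left hS (Real.rpow_pos_of_pos hM' _).le)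
      have hpos : 0 ≤ 1 / (α - 1) := by
        have : (0:ℝ) < α - 1 := by linarith
        positivity
      exact mul_le_mul_of_nonneg_left hlog hpos

end AltTSCAux

/-- at download cost `D = 1`, for every order `α ∈ (0,∞)`, `α ≠ 1`, the
minimal Rényi divergence of the alternative PIR scheme equals `(K-1) log(L+1)`, that of
the symmetric TSC scheme equals `(K-1) log N`, and `(K-1) log(L+1) < (K-1) log N`. -/
theorem alt_beats_tsc_at_D_one (N K L : ℕ) (hN : 3 ≤ N) (hK : 2 ≤ K)
    (hL1 : 1 ≤ L) (hL2 : L ≤ N - 2)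
    (α : ℝ) (hα0 : 0 < α) (hα1 : α ≠ 1) :
    IsLeast
      {v : ℝ | ∃ p : ℕ → ℝ, AltFeasible N K L 1 p ∧
        v = renyiDiv (N * (L + 1) ^ (K - 1)) α p}
      (((K : ℝ) - 1) * Real.log ((L : ℝ) + 1)) ∧
    IsLeast
      {v : ℝ | ∃ p : ℕ → ℝ, TSCFeasible N K 1 p ∧ v = renyiDiv (N ^ K) α p}
      (((K : ℝ) - 1) * Real.log N) ∧
    ((K : ℝ) - 1) * Real.log ((L : ℝ) + 1) < ((K : ℝ) - 1) * Real.log N :=  by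
  have hKR : (2:ℝ) ≤ (K:ℝ) := by exact_mod_cast hK
  have hNpos : 0 < N := by omega
  have hLN : L + 1 < N := by omega
  have hMalt : N ≤ N * (L + 1) ^ (K - 1) :=
    Nat.le_mul_of_pos_right N (Nat.pow_pos (by omega))
  have hMtsc : N ≤ N ^ K := Nat.le_self_pow (by omega) N
  have hK1 : ((K - 1 : ℕ) : ℝ) = (K:ℝ) - 1 := by
    have : 1 ≤ K := by omega
    push_cast [this]
    ring
  refine ⟨?_, ?_, ?_⟩
  · have h := AltTSCAux.isLeast_general N (N * (L + 1) ^ (K - 1)) hNpos hMalt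
      (L : ℝ) (by exact_mod_cast hL1) (altCost N L)
      (fun m => by unfold altCost; split <;> simp) α hα0 hα1
    have hval : Real.log ((N * (L + 1) ^ (K - 1) : ℕ) : ℝ) - Real.log N
        = ((K : ℝ) - 1) * Real.log ((L : ℝ) + 1) := by
      have hNne : ((N:ℝ)) ≠ 0 := by positivity
      have hLpow : ((L:ℝ) + 1) ^ (K - 1) ≠ 0 := by positivity
      push_cast
      rw [Real.log_mul hNne hLpow, Real.log_pow, hK1]
      ring
    rw [hval] at h
    exact h
  · have h := AltTSCAux.isLeast_general N (N ^ K) hNpos hMtsc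
      ((N : ℝ) - 1) (by push_cast; linarith [show (3:ℝ) ≤ (N:ℝ) by exact_mod_cast hN])
      (tscCost N) (fun m => by unfold tscCost; split <;> ring) α hα0 hα1
    have hval : Real.log ((N ^ K : ℕ) : ℝ) - Real.log N
        = ((K : ℝ) - 1) * Real.log N := by
      push_cast
      rw [Real.log_pow]
      ring
    rw [hval] at h
    exact h
  · have hlog : Real.log ((L:ℝ) + 1) < Real.log N := by
      apply Real.log_lt_log (by positivity)
      exact_mod_cast hLN
    have : (0:ℝ) < (K:ℝ) - 1 := by linarith
    exact mul_lt_mul_of_pos_left hlog this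
end
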